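/- Let α, β, m be natural numbers with β ≤ m, and let u, v, w, z be α×α complex matrices such that the 2α×2α block matrix fromBlocks u v w z is unitary. Let I be the index type (Fin α ⊕ Fin m) ⊕ (Fin m ⊕ Fin α) and let U be the I×I complex matrix given in 4×4 block form with respect to the partition of sizes (α, m, m, α) by [[u, 0, 0, v], [0, 0, 1_m, 0], [0, 1_m, 0, 0], [w, 0, 0, z]]. Let A and B be Hermitian (α+β)×(α+β) complex matrices (indexed by Fin α ⊕ Fin β), let ι : Fin α ⊕ Fin β → I be the embedding sending the Fin α part to the first group of the partition and the Fin β part to the first β coordinates of the second group (via β ≤ m), and let Ã, B̃ be the I×I matrices with Ã(ι i, ι j) = A(i, j), B̃(ι i, ι j) = B(i, j), and all other entries zero. Let S be the (α+β)×(α+β) matrix fromBlocks u 0 0 0, set X = Ã + U·B̃·Uᴴ and M = (fromBlocks A 0 0 B)·(fromBlocks 1 S Sᴴ 1). Let γ₁, γ₂ be real numbers and λ : ℕ → ℝ a sequence with ∑_k λ_k² < ∞. Then exp(-(γ₁/2)·tr(X²) + i·γ₂·tr X) · ∏_{k=0}^∞ exp(-i·λ_k·tr X)·(det(1 - i·λ_k·X))⁻¹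 = exp(-(γ₁/2)·tr(M²) + i·γ₂·(tr A + tr B)) · ∏_{k=0}^∞ exp(-i·λ_k·(tr A + tr B))·(det(1 - i·λ_k·M))⁻¹; in particular the left-hand side does not depend on m. -/

import Mathlib

open Matrix

/-- The big `(α + m + m + α) × (α + m + m + α)` block matrix
`[[u, 0, 0, v], [0, 0, 1, 0], [0, 1, 0, 0], [w, 0, 0, z]]`. -/
noncomputable def bigU (α m : ℕ) (u v w z : Matrix (Fin α) (Fin α) ℂ) :
    Matrix ((Fin α ⊕ Fin m) ⊕ (Fin m ⊕ Fin α)) ((Fin α ⊕ Fin m) ⊕ (Fin m ⊕ Fin α)) ℂ :=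
  Matrix.fromBlocks
    (Matrix.fromBlocks u 0 0 0)
    (Matrix.fromBlocks 0 v (1 : Matrix (Fin m) (Fin m) ℂ) 0)
    (Matrix.fromBlocks 0 (1 : Matrix (Fin m) (Fin m) ℂ) w 0)
    (Matrix.fromBlocks 0 0 0 z)

/-- The embedding of indices `Fin α ⊕ Fin β` into `(Fin α ⊕ Fin m) ⊕ (Fin m ⊕ Fin α)`,
sending the `Fin α` part to the first group and the `Fin β` part to the first `β`
coordinates of the second group. -/
def emb (α β m : ℕ) (hβ : β ≤ m) :
    Fin α ⊕ Fin β → (Fin α ⊕ Fin m) ⊕ (Fin m ⊕ Fin α) :=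
  Sum.elim (fun i => Sum.inl (Sum.inl i)) (fun j => Sum.inr (Sum.inl (Fin.castLE hβ j)))

section Aux

variable {n I : Type*} [Fintype n] [Fintype I] [DecidableEq n] [DecidableEq I]

/-- The 0/1 "inclusion" matrix of an embedding of index types. -/
def embMat (ι : n → I) : Matrix I n ℂ :=
  Matrix.of fun p i => if p = ι i then 1 else 0

lemma embMat_apply (ι : n → I) (p : I) (i : n) :
    embMat ι p i = if p = ι i then 1 else 0 := rfl

lemma embMat_conjTranspose_apply (ι : n → I) (p : I) (i : n) :
    (embMat ι)ᴴ i p = if p = ι i then 1 else 0 := by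
  simp [embMat_apply, Matrix.conjTranspose_apply, apply_ite (star : ℂ → ℂ)]

lemma embMat_conjTranspose_mul_embMat (ι : n → I) (hι : Function.Injective ι) :
    (embMat ι)ᴴ * embMat ι = 1 := by
  ext i j
  simp [Matrix.mul_apply, embMat_conjTranspose_apply, embMat_apply, ite_mul,
    Finset.sum_ite_eq', hι.eq_iff, Matrix.one_apply, eq_comm]

lemma embMat_conjTranspose_mul_mul (ι : n → I) (U : Matrix I I ℂ) :
    (embMat ι)ᴴ * U * embMat ι = U.submatrix ι ι := by
  ext i j
  simp [Matrix.mul_apply, embMat_conjTranspose_apply, embMat_apply, ite_mul, mul_ite,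
    Finset.sum_ite_eq', Finset.sum_ite_eq]

lemma eq_embMat_mul_mul (ι : n → I) (hι : Function.Injective ι) (A : Matrix n n ℂ)
    (T : Matrix I I ℂ)
    (h1 : ∀ i j, T (ι i) (ι j) = A i j)
    (h0 : ∀ p q, (p ∉ Set.range ι ∨ q ∉ Set.range ι) → T p q = 0) :
    T = embMat ι * A * (embMat ι)ᴴ := by
  ext p q
  have hr : (embMat ι * A * (embMat ι)ᴴ) p q
      = ∑ j, (∑ i, (if p = ι i then (1 : ℂ) else 0) * A i j) *
          (if q = ι j then (1 : ℂ) else 0) := by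
    simp [Matrix.mul_apply, embMat_apply, embMat_conjTranspose_apply]
  rw [hr]
  by_cases hp : p ∈ Set.range ι
  · obtain ⟨i0, rfl⟩ := hp
    by_cases hq : q ∈ Set.range ι
    · obtain ⟨j0, rfl⟩ := hq
      rw [h1]
      simp [hι.eq_iff, ite_mul, mul_ite, Finset.sum_ite_eq, Finset.sum_ite_eq']
    · have hq' : ∀ j, q ≠ ι j := fun j h => hq ⟨j, h.symm⟩
      simp [hq', h0 _ _ (Or.inr hq)]
  · have hp' : ∀ i, p ≠ ι i := fun i h => hp ⟨i, h.symm⟩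
    simp [hp', h0 _ _ (Or.inl hp)]

lemma trace_fromBlocks' {n₁ n₂ : Type*} [Fintype n₁] [Fintype n₂]
    (A : Matrix n₁ n₁ ℂ) (B : Matrix n₁ n₂ ℂ) (C : Matrix n₂ n₁ ℂ) (D : Matrix n₂ n₂ ℂ) :
    (Matrix.fromBlocks A B C D).trace = A.trace + D.trace := by
  simp [Matrix.trace, Fintype.sum_sum_type, Matrix.diag]

end Aux

/-- The full characteristic function of the polymorphism `π_{U_m}` depends only on
the corner `S` of the unitary matrix, not on `m`. -/
theorem charFun_eq_of_corner (α β m : ℕ) (hβ : β ≤ m)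
    (u v w z : Matrix (Fin α) (Fin α) ℂ)
    (huvwz : Matrix.fromBlocks u v w z ∈ Matrix.unitaryGroup (Fin α ⊕ Fin α) ℂ)
    (A B : Matrix (Fin α ⊕ Fin β) (Fin α ⊕ Fin β) ℂ)
    (hA : A.IsHermitian) (hB : B.IsHermitian)
    (Atil Btil : Matrix ((Fin α ⊕ Fin m) ⊕ (Fin m ⊕ Fin α))
      ((Fin α ⊕ Fin m) ⊕ (Fin m ⊕ Fin α)) ℂ)
    (hAtil : ∀ i j, Atil (emb α β m hβ i) (emb α β m hβ j) = A i j)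
    (hAtil0 : ∀ p q, (p ∉ Set.range (emb α β m hβ) ∨ q ∉ Set.range (emb α β m hβ)) →
      Atil p q = 0)
    (hBtil : ∀ i j, Btil (emb α β m hβ i) (emb α β m hβ j) = B i j)
    (hBtil0 : ∀ p q, (p ∉ Set.range (emb α β m hβ) ∨ q ∉ Set.range (emb α β m hβ)) →
      Btil p q = 0)
    (S : Matrix (Fin α ⊕ Fin β) (Fin α ⊕ Fin β) ℂ)
    (hS : S = Matrix.fromBlocks u 0 0 0)
    (X : Matrix ((Fin α ⊕ Fin m) ⊕ (Fin m ⊕ Fin α))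
      ((Fin α ⊕ Fin m) ⊕ (Fin m ⊕ Fin α)) ℂ)
    (hX : X = Atil + bigU α m u v w z * Btil * (bigU α m u v w z)ᴴ)
    (M : Matrix ((Fin α ⊕ Fin β) ⊕ (Fin α ⊕ Fin β)) ((Fin α ⊕ Fin β) ⊕ (Fin α ⊕ Fin β)) ℂ)
    (hM : M = Matrix.fromBlocks A 0 0 B * Matrix.fromBlocks 1 S Sᴴ 1)
    (γ₁ γ₂ : ℝ) (lam : ℕ → ℝ) (hlam : Summable (fun k => lam k ^ 2)) :
    Complex.exp (-((γ₁ : ℂ) / 2) * (X ^ 2).trace + Complex.I * (γ₂ : ℂ) * X.trace) *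
        ∏' k : ℕ, Complex.exp (-Complex.I * (lam k : ℂ) * X.trace) *
          ((1 - (Complex.I * (lam k : ℂ)) • X).det)⁻¹
      = Complex.exp (-((γ₁ : ℂ) / 2) * (M ^ 2).trace +
            Complex.I * (γ₂ : ℂ) * (A.trace + B.trace)) *
          ∏' k : ℕ, Complex.exp (-Complex.I * (lam k : ℂ) * (A.trace + B.trace)) *
            ((1 - (Complex.I * (lam k : ℂ)) • M).det)⁻¹ := by
  classical
  set ι := emb α β m hβ with hιdef
  have hι : Function.Injective ι := by
    intro x y hxy
    rcases x with x | x <;> rcases y with y | y <;>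
      simp [hιdef, emb, Fin.castLE_inj] at hxy <;> simp [hxy]
  set U := bigU α m u v w z with hUdef
  -- unitarity of the big matrix
  have h2 : (Matrix.fromBlocks u v w z)ᴴ * Matrix.fromBlocks u v w z = 1 := by
    have := huvwz.1
    rwa [Matrix.star_eq_conjTranspose] at this
  have h2' : Matrix.fromBlocks (uᴴ * u + wᴴ * w) (uᴴ * v + wᴴ * z)
      (vᴴ * u + zᴴ * w) (vᴴ * v + zᴴ * z)
      = Matrix.fromBlocks (1 : Matrix (Fin α) (Fin α) ℂ) 0 0 1 := by
    rw [← Matrix.fromBlocks_multiply, ← Matrix.fromBlocks_conjTranspose, h2,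
      Matrix.fromBlocks_one]
  obtain ⟨e1, e2, e3, e4⟩ := Matrix.fromBlocks_inj.mp h2'
  have hUU : Uᴴ * U = 1 := by
    rw [hUdef]
    show (bigU α m u v w z)ᴴ * bigU α m u v w z = 1
    rw [bigU, Matrix.fromBlocks_conjTranspose, Matrix.fromBlocks_conjTranspose,
      Matrix.fromBlocks_conjTranspose, Matrix.fromBlocks_conjTranspose,
      Matrix.fromBlocks_conjTranspose, Matrix.fromBlocks_multiply]
    simp only [Matrix.fromBlocks_multiply, Matrix.mul_zero, Matrix.zero_mul,
      Matrix.mul_one, Matrix.one_mul, add_zero, zero_add,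
      Matrix.conjTranspose_zero, Matrix.conjTranspose_one]
    simp only [Matrix.fromBlocks_add, add_zero, zero_add, e1, e2, e3, e4]
    simp only [Matrix.fromBlocks_zero, Matrix.fromBlocks_one]
  -- the submatrix of U along the embedding is S
  have hsub : U.submatrix ι ι = S := by
    rw [hS]
    ext i j
    rcases i with i | i <;> rcases j with j | j <;>
      simp [hUdef, hιdef, bigU, emb, Matrix.submatrix_apply]
  set E := embMat ι with hEdef
  have hEE : Eᴴ * E = 1 := embMat_conjTranspose_mul_embMat ι hι
  have hAt : Atil = E * A * Eᴴ := eq_embMat_mul_mul ι hι A Atil hAtil hAtil0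
  have hBt : Btil = E * B * Eᴴ := eq_embMat_mul_mul ι hι B Btil hBtil hBtil0
  set F := Matrix.fromCols E (U * E) with hFdef
  set D := Matrix.fromBlocks A 0 0 B with hDdef
  set G := Matrix.fromBlocks (1 : Matrix (Fin α ⊕ Fin β) (Fin α ⊕ Fin β) ℂ) S Sᴴ 1
    with hGdef
  have hFH : Fᴴ = Matrix.fromRows Eᴴ (Eᴴ * Uᴴ) := by
    rw [hFdef, Matrix.conjTranspose_fromCols_eq_fromRows_conjTranspose,
      Matrix.conjTranspose_mul]
  -- X = F D Fᴴ
  have hXF : X = F * D * Fᴴ := by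
    rw [hX, hFH, hFdef, hDdef, Matrix.fromCols_mul_fromBlocks,
      Matrix.fromCols_mul_fromRows, hAt, hBt]
    simp only [Matrix.mul_zero, Matrix.zero_mul, add_zero, zero_add, Matrix.mul_assoc]
  -- Fᴴ F = G
  have hFF : Fᴴ * F = G := by
    have c2 : Eᴴ * (U * E) = S := by
      rw [← Matrix.mul_assoc, embMat_conjTranspose_mul_mul, hsub]
    have c3 : Eᴴ * Uᴴ * E = Sᴴ := by
      rw [embMat_conjTranspose_mul_mul, ← Matrix.conjTranspose_submatrix, hsub]
    have c4 : Eᴴ * Uᴴ * (U * E) = 1 := by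
      calc Eᴴ * Uᴴ * (U * E) = Eᴴ * (Uᴴ * U * E) := by simp only [Matrix.mul_assoc]
        _ = 1 := by rw [hUU, Matrix.one_mul, hEE]
    rw [hFH, hFdef, Matrix.fromRows_mul_fromCols, hGdef, hEE, c2, c3, c4]
  have hMDG : M = D * G := by rw [hM, hDdef, hGdef]
  have hNF : D * Fᴴ * F = M := by rw [Matrix.mul_assoc, hFF, hMDG]
  -- trace identities
  have htrX : X.trace = M.trace := by
    rw [hXF, Matrix.mul_assoc, Matrix.trace_mul_comm, hNF]
  have htrM : M.trace = A.trace + B.trace := by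
    rw [hMDG, hDdef, hGdef, Matrix.fromBlocks_multiply]
    simp only [Matrix.mul_zero, Matrix.zero_mul, Matrix.mul_one, Matrix.one_mul,
      add_zero, zero_add]
    exact trace_fromBlocks' _ _ _ _
  have htrX' : X.trace = A.trace + B.trace := htrX.trans htrM
  have htrX2 : (X ^ 2).trace = (M ^ 2).trace := by
    rw [pow_two, pow_two, hXF]
    rw [show F * D * Fᴴ * (F * D * Fᴴ) = F * (D * Fᴴ * (F * (D * Fᴴ))) by
      simp only [Matrix.mul_assoc]]
    rw [Matrix.trace_mul_comm]
    rw [show D * Fᴴ * (F * (D * Fᴴ)) * F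
        = (D * Fᴴ * F) * (D * Fᴴ * F) by simp only [Matrix.mul_assoc]]
    rw [hNF]
  -- determinant identity
  have hdet : ∀ c : ℂ, (1 - c • X).det = (1 - c • M).det := by
    intro c
    have h1 : 1 - c • X = 1 - F * (c • (D * Fᴴ)) := by
      rw [hXF, Matrix.mul_smul, Matrix.mul_assoc]
    have h2 : 1 - c • M = 1 - (c • (D * Fᴴ)) * F := by
      rw [Matrix.smul_mul, hNF]
    rw [h1, h2, Matrix.det_one_sub_mul_comm]
  rw [htrX', htrX2]
  congr 1
  exact tprod_congr fun k => by rw [hdet]
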